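/- Let R be a p-torsion-free commutative ring, M, N finite free R-modules of rank 2g with F: N → M, V: M → N satisfying F∘V = p and V∘F = p, and suppose that ker(F̄) and ker(V̄) are direct summands of N̄ := N/pN and M̄ := M/pM respectively, of rank g. Then F̄ induces an isomorphism N̄/ker(F̄) ≅ ker(V̄) and V̄ induces an isomorphism M̄/ker(V̄) ≅ ker(F̄); consequently one obtains a direct-summand-wise isomorphism δ: ker(F̄) ⊕ N̄/ker(F̄) ≅ M̄/ker(V̄) ⊕ ker(V̄), given by [V̄]⁻¹ ⊕ F̄. -/

import Mathlib

open Pointwise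

lemma stmt6_tf {R : Type*} [CommRing R] (p : ℕ) (hpnzd : ∀ x : R, (p : R) * x = 0 → x = 0)
    {M : Type*} [AddCommGroup M] [Module R M] [Module.Free R M]
    (x : M) (hx : (p : R) • x = 0) : x = 0 := by
  let b := Module.Free.chooseBasis R M
  apply b.repr.injective
  ext i
  have := congrArg (fun y => b.repr y i) hx
  simp only [map_smul, Finsupp.smul_apply, map_zero, Finsupp.coe_zero, Pi.zero_apply,
    smul_eq_mul] at this ⊢
  exact hpnzd _ this

lemma stmt6_aux {R : Type*} [CommRing R] (p : ℕ) (hpnzd : ∀ x : R, (p : R) * x = 0 → x = 0)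
    {M N : Type*} [AddCommGroup M] [Module R M] [AddCommGroup N] [Module R N]
    [Module.Free R M]
    (F : N →ₗ[R] M) (V : M →ₗ[R] N)
    (hFV : F ∘ₗ V = (p : R) • LinearMap.id)
    (hVF : V ∘ₗ F = (p : R) • LinearMap.id)
    (hF : (Ideal.span {(p : R)} • (⊤ : Submodule R N)) ≤
      Submodule.comap F (Ideal.span {(p : R)} • (⊤ : Submodule R M)))
    (hV : (Ideal.span {(p : R)} • (⊤ : Submodule R M)) ≤
      Submodule.comap V (Ideal.span {(p : R)} • (⊤ : Submodule R N))) :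
    LinearMap.range (Submodule.mapQ _ _ F hF) = LinearMap.ker (Submodule.mapQ _ _ V hV) := by
  have hM : Ideal.span {(p : R)} • (⊤ : Submodule R M) = (p : R) • ⊤ :=
    Submodule.ideal_span_singleton_smul _ _
  have hN : Ideal.span {(p : R)} • (⊤ : Submodule R N) = (p : R) • ⊤ :=
    Submodule.ideal_span_singleton_smul _ _
  apply le_antisymm
  · rintro x ⟨n, rfl⟩
    obtain ⟨n, rfl⟩ := Submodule.Quotient.mk_surjective _ n
    simp only [LinearMap.mem_ker, Submodule.mapQ_apply, Submodule.Quotient.mk_eq_zero]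
    have hVF' : V (F n) = (p : R) • n := by
      have := congrArg (fun f => f n) hVF
      simpa using this
    rw [hVF', hN]
    exact Submodule.smul_mem_pointwise_smul _ _ _ trivial
  · intro m hm
    obtain ⟨m, rfl⟩ := Submodule.Quotient.mk_surjective _ m
    simp only [LinearMap.mem_ker, Submodule.mapQ_apply, Submodule.Quotient.mk_eq_zero, hN] at hm
    rw [← SetLike.mem_coe, Submodule.coe_pointwise_smul] at hm
    obtain ⟨n, -, hn⟩ := Set.mem_smul_set.mp hm
    have key : m = F n := by
      have hFV' : F (V m) = (p : R) • m := by
        have := congrArg (fun f => f m) hFV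
        simpa using this
      have : (p : R) • (m - F n) = 0 := by
        rw [smul_sub, ← hFV', ← map_smul, hn, sub_self]
      have := stmt6_tf p hpnzd _ this
      exact (sub_eq_zero.mp this).symm ▸ rfl
    exact ⟨Submodule.Quotient.mk n, by rw [Submodule.mapQ_apply, key]⟩



/-- The 'zip isomorphism' of a Dieudonné module: let `R` be a
`p`-torsion-free commutative ring, `M`, `N` finite free of rank `2g`, and
`F : N → M`, `V : M → N` with `F∘V = p·id`, `V∘F = p·id`.  Assume `ker F̄` and
`ker V̄` are direct summands of `N̄ = N/pN`, `M̄ = M/pM`, of rank `g` (in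
particular generated by `g` elements).  Then `F̄` induces an isomorphism
`N̄/ker F̄ ≅ ker V̄`, `V̄` induces an isomorphism `M̄/ker V̄ ≅ ker F̄`, and these
assemble into a direct-summand-wise isomorphism
`δ = [V̄]⁻¹ ⊕ F̄ : ker F̄ ⊕ N̄/ker F̄ ≅ M̄/ker V̄ ⊕ ker V̄`. -/
theorem stmt6 (p : ℕ) (hp : p.Prime) (g : ℕ) (R : Type*) [CommRing R]
    (hpnzd : ∀ x : R, (p : R) * x = 0 → x = 0)
    (M N : Type*) [AddCommGroup M] [Module R M] [AddCommGroup N] [Module R N]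
    [Module.Free R M] [Module.Finite R M] [Module.Free R N] [Module.Finite R N]
    (hrankM : Module.finrank R M = 2 * g) (hrankN : Module.finrank R N = 2 * g)
    (F : N →ₗ[R] M) (V : M →ₗ[R] N)
    (hFV : F ∘ₗ V = (p : R) • LinearMap.id)
    (hVF : V ∘ₗ F = (p : R) • LinearMap.id)
    (hF : (Ideal.span {(p : R)} • (⊤ : Submodule R N)) ≤
      Submodule.comap F (Ideal.span {(p : R)} • (⊤ : Submodule R M)))
    (hV : (Ideal.span {(p : R)} • (⊤ : Submodule R M)) ≤
      Submodule.comap V (Ideal.span {(p : R)} • (⊤ : Submodule R N)))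
    (Fbar : (N ⧸ Ideal.span {(p : R)} • (⊤ : Submodule R N)) →ₗ[R]
      (M ⧸ Ideal.span {(p : R)} • (⊤ : Submodule R M)))
    (Vbar : (M ⧸ Ideal.span {(p : R)} • (⊤ : Submodule R M)) →ₗ[R]
      (N ⧸ Ideal.span {(p : R)} • (⊤ : Submodule R N)))
    (hFbar : Fbar = Submodule.mapQ _ _ F hF) (hVbar : Vbar = Submodule.mapQ _ _ V hV)
    -- `ker F̄` is a direct summand of rank `g`:
    (hkerF : (∃ K, IsCompl (LinearMap.ker Fbar) K) ∧
      ∃ s : Fin g → (N ⧸ Ideal.span {(p : R)} • (⊤ : Submodule R N)),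
        Submodule.span R (Set.range s) = LinearMap.ker Fbar)
    -- `ker V̄` is a direct summand of rank `g`:
    (hkerV : (∃ K, IsCompl (LinearMap.ker Vbar) K) ∧
      ∃ s : Fin g → (M ⧸ Ideal.span {(p : R)} • (⊤ : Submodule R M)),
        Submodule.span R (Set.range s) = LinearMap.ker Vbar) :
    ∃ (e₁ : ((N ⧸ Ideal.span {(p : R)} • (⊤ : Submodule R N)) ⧸ LinearMap.ker Fbar)
        ≃ₗ[R] LinearMap.ker Vbar)
      (e₂ : ((M ⧸ Ideal.span {(p : R)} • (⊤ : Submodule R M)) ⧸ LinearMap.ker Vbar)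
        ≃ₗ[R] LinearMap.ker Fbar),
      (∀ n, ((e₁ (Submodule.Quotient.mk n) :
        M ⧸ Ideal.span {(p : R)} • (⊤ : Submodule R M))) = Fbar n) ∧
      (∀ m, ((e₂ (Submodule.Quotient.mk m) :
        N ⧸ Ideal.span {(p : R)} • (⊤ : Submodule R N))) = Vbar m) ∧
      ∃ δ : (LinearMap.ker Fbar ×
          ((N ⧸ Ideal.span {(p : R)} • (⊤ : Submodule R N)) ⧸ LinearMap.ker Fbar))
        ≃ₗ[R] (((M ⧸ Ideal.span {(p : R)} • (⊤ : Submodule R M)) ⧸ LinearMap.ker Vbar)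
          × LinearMap.ker Vbar),
        ∀ x q, δ (x, q) = (e₂.symm x, e₁ q) := by
  have h₁ : LinearMap.range Fbar = LinearMap.ker Vbar := by
    rw [hFbar, hVbar]; exact stmt6_aux p hpnzd F V hFV hVF hF hV
  have h₂ : LinearMap.range Vbar = LinearMap.ker Fbar := by
    rw [hVbar, hFbar]; exact stmt6_aux p hpnzd V F hVF hFV hV hF
  refine ⟨Fbar.quotKerEquivRange.trans (LinearEquiv.ofEq _ _ h₁),
    Vbar.quotKerEquivRange.trans (LinearEquiv.ofEq _ _ h₂), fun n => ?_, fun m => ?_,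
    ⟨LinearEquiv.prodCongr (Vbar.quotKerEquivRange.trans (LinearEquiv.ofEq _ _ h₂)).symm
      (Fbar.quotKerEquivRange.trans (LinearEquiv.ofEq _ _ h₁)), fun x q => rfl⟩⟩
  · simpa using Fbar.quotKerEquivRange_apply_mk n
  · simpa using Vbar.quotKerEquivRange_apply_mk m
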